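/- Let A be an n×n real symmetric positive-definite matrix, and define L = (A − Id) · ∫₀¹ ((1−λ)·Id + λ·A)⁻¹ dλ (the integral taken entrywise; note (1−λ)·Id + λ·A is invertible for all λ ∈ [0,1]). Then L is a symmetric matrix and exp(L) = A, where exp denotes the matrix exponential. -/

import Mathlib

open Matrix MeasureTheory intervalIntegral

attribute [local instance] Matrix.normedAddCommGroup Matrix.normedSpace

-- scalar lemma
lemma scalar_log (m : ℝ) (hm : 0 < m) :
    (m - 1) * ∫ t in (0:ℝ)..1, (1 - t + t * m)⁻¹ = Real.log m := by
  have hpos : ∀ t ∈ Set.uIcc (0:ℝ) 1, 0 < 1 - t + t * m := by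
    intro t ht
    rw [Set.uIcc_of_le (by norm_num)] at ht
    rcases eq_or_lt_of_le ht.2 with h | h
    · subst h; simpa using hm
    · nlinarith [mul_nonneg ht.1 hm.le]
  have hderiv : ∀ t ∈ Set.uIcc (0:ℝ) 1,
      HasDerivAt (fun s => Real.log (1 - s + s * m)) ((m - 1) * (1 - t + t * m)⁻¹) t := by
    intro t ht
    have h1 : HasDerivAt (fun s : ℝ => 1 - s + s * m) (m - 1) t := by
      have := ((hasDerivAt_id' t).const_sub 1).add ((hasDerivAt_id' t).mul_const m); exact this.congr_deriv (by ring)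
    have := (Real.hasDerivAt_log (hpos t ht).ne').comp t h1
    simpa [mul_comm, div_eq_mul_inv, Function.comp_def] using this
  have hcont : ContinuousOn (fun t => (m - 1) * (1 - t + t * m)⁻¹) (Set.uIcc (0:ℝ) 1) := by
    apply ContinuousOn.mul continuousOn_const
    exact ContinuousOn.inv₀ (by fun_prop) (fun t ht => (hpos t ht).ne')
  have := intervalIntegral.integral_eq_sub_of_hasDerivAt hderiv
    (hcont.intervalIntegrable)
  rw [intervalIntegral.integral_const_mul] at this
  simp at this
  simpa using this

/-- For a symmetric positive-definite matrix A, the matrix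
L = (A − Id)·∫₀¹ ((1−λ)Id + λA)⁻¹ dλ is symmetric and exp(L) = A. -/
theorem stmt_15 (n : ℕ) (A : Matrix (Fin n) (Fin n) ℝ)
    (hsymm : Aᵀ = A)
    (hpos : ∀ x : Fin n → ℝ, x ≠ 0 → 0 < x ⬝ᵥ A.mulVec x) :
    (((A - 1) * ∫ t in (0:ℝ)..1,
        ((1 - t) • (1 : Matrix (Fin n) (Fin n) ℝ) + t • A)⁻¹)ᵀ =
      (A - 1) * ∫ t in (0:ℝ)..1,
        ((1 - t) • (1 : Matrix (Fin n) (Fin n) ℝ) + t • A)⁻¹) ∧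
    NormedSpace.exp ((A - 1) * ∫ t in (0:ℝ)..1,
        ((1 - t) • (1 : Matrix (Fin n) (Fin n) ℝ) + t • A)⁻¹) = A := by
  have hA : A.IsHermitian := by
    rw [Matrix.IsHermitian, conjTranspose]
    simpa [Matrix.map, Matrix.transpose] using hsymm
  have hPD : A.PosDef := Matrix.PosDef.of_dotProduct_mulVec_pos hA (fun x hx => by simpa using hpos x hx)
  set μ : Fin n → ℝ := hA.eigenvalues with hμdef
  have hμ : ∀ i, 0 < μ i := hPD.eigenvalues_pos
  set U : Matrix (Fin n) (Fin n) ℝ := (hA.eigenvectorUnitary : Matrix (Fin n) (Fin n) ℝ) with hUdef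
  have hU2 : U * star U = 1 := Matrix.mem_unitaryGroup_iff.mp hA.eigenvectorUnitary.2
  have hU1 : star U * U = 1 := Matrix.mem_unitaryGroup_iff'.mp hA.eigenvectorUnitary.2
  have hUinv : U⁻¹ = star U := Matrix.inv_eq_right_inv hU2
  have hsUinv : (star U)⁻¹ = U := Matrix.inv_eq_right_inv hU1
  set C : (Fin n → ℝ) → Matrix (Fin n) (Fin n) ℝ := fun v => U * diagonal v * star U with hC
  have hspec : A = C μ := by
    have := hA.spectral_theorem
    simpa [hC] using this
  have hCmul : ∀ v w, C v * C w = C (v * w) := by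
    intro v w
    simp only [hC, mul_assoc]
    rw [← mul_assoc (star U) U, hU1, one_mul, ← mul_assoc (diagonal v), diagonal_mul_diagonal]
    rfl
  have hCone : C 1 = 1 := by simp only [hC, Pi.one_def, diagonal_one, mul_one]; exact hU2
  have hCadd : ∀ v w, C (v + w) = C v + C w := by
    intro v w
    simp only [hC]
    rw [show v + w = fun i => v i + w i from rfl, ← diagonal_add, Matrix.mul_add, Matrix.add_mul]
  have hCsub : ∀ v w, C (v - w) = C v - C w := by
    intro v w
    simp only [hC]
    rw [show v - w = fun i => v i - w i from rfl, ← diagonal_sub, Matrix.mul_sub, Matrix.sub_mul]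
  have hCsmul : ∀ (c : ℝ) v, C (c • v) = c • C v := by
    intro c v
    simp only [hC]
    rw [diagonal_smul, Matrix.mul_smul, Matrix.smul_mul]
  have hstar : ∀ M : Matrix (Fin n) (Fin n) ℝ, star M = Mᵀ := by
    intro M; ext i j; simp [Matrix.star_apply]
  have hCT : ∀ v, (C v)ᵀ = C v := by
    intro v
    simp only [hC]
    rw [transpose_mul, transpose_mul, diagonal_transpose, hstar U, transpose_transpose,
      ← mul_assoc, ← hstar U]
  -- denominators positive on [0,1]
  have hd : ∀ t ∈ Set.uIcc (0:ℝ) 1, ∀ i, 0 < 1 - t + t * μ i := by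
    intro t ht i
    rw [Set.uIcc_of_le (by norm_num)] at ht
    rcases eq_or_lt_of_le ht.2 with h | h
    · subst h; simpa using hμ i
    · nlinarith [mul_nonneg ht.1 (hμ i).le]
  -- the linear combination as conjugated diagonal
  have hcomb : ∀ t : ℝ, (1 - t) • (1 : Matrix (Fin n) (Fin n) ℝ) + t • A
      = C (fun i => 1 - t + t * μ i) := by
    intro t
    have hv : (fun i => 1 - t + t * μ i) = (1 - t) • (1 : Fin n → ℝ) + t • μ := by
      funext i; simp [mul_comm]
    rw [hv, hCadd, hCsmul, hCsmul, hCone, ← hspec]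
  -- inverse formula on [0,1]
  have hinv : Set.EqOn (fun t : ℝ => ((1 - t) • (1 : Matrix (Fin n) (Fin n) ℝ) + t • A)⁻¹)
      (fun t : ℝ => C (fun i => (1 - t + t * μ i)⁻¹)) (Set.uIcc (0:ℝ) 1) := by
    intro t ht
    simp only
    rw [hcomb t]
    apply Matrix.inv_eq_right_inv
    rw [hCmul, show ((fun i => 1 - t + t * μ i) * fun i => (1 - t + t * μ i)⁻¹) = (1 : Fin n → ℝ)
      from funext fun i => mul_inv_cancel₀ (hd t ht i).ne', hCone]
  -- C as a continuous linear map
  let T : (Fin n → ℝ) →L[ℝ] Matrix (Fin n) (Fin n) ℝ :=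
    LinearMap.toContinuousLinearMap ⟨⟨C, fun x y => hCadd x y⟩, fun c v => hCsmul c v⟩
  have hT : ∀ v, T v = C v := fun v => rfl
  -- integrability of the diagonal entries function
  have hgcont : ContinuousOn (fun t : ℝ => (fun i => (1 - t + t * μ i)⁻¹ : Fin n → ℝ))
      (Set.uIcc (0:ℝ) 1) := by
    apply continuousOn_pi.2
    intro i
    exact ContinuousOn.inv₀ (by fun_prop) (fun t ht => (hd t ht i).ne')
  have hgint : IntervalIntegrable (fun t : ℝ => (fun i => (1 - t + t * μ i)⁻¹ : Fin n → ℝ))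
      MeasureTheory.volume 0 1 := hgcont.intervalIntegrable
  -- compute the integral
  have hint : (∫ t in (0:ℝ)..1, ((1 - t) • (1 : Matrix (Fin n) (Fin n) ℝ) + t • A)⁻¹)
      = C (fun i => ∫ t in (0:ℝ)..1, (1 - t + t * μ i)⁻¹) := by
    rw [intervalIntegral.integral_congr hinv]
    have harg : (∫ t in (0:ℝ)..1, (fun i => (1 - t + t * μ i)⁻¹ : Fin n → ℝ))
        = fun i => ∫ t in (0:ℝ)..1, (1 - t + t * μ i)⁻¹ := by
      funext i
      exact ((ContinuousLinearMap.proj (R := ℝ) (φ := fun _ : Fin n => ℝ)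
        i).intervalIntegral_comp_comm hgint).symm
    have h1 : (∫ t in (0:ℝ)..1, C (fun i => (1 - t + t * μ i)⁻¹))
        = T (∫ t in (0:ℝ)..1, (fun i => (1 - t + t * μ i)⁻¹ : Fin n → ℝ)) :=
      T.intervalIntegral_comp_comm hgint
    rw [h1, harg, hT]
  -- the final diagonal entries
  have hlog : (A - 1) * (∫ t in (0:ℝ)..1, ((1 - t) • (1 : Matrix (Fin n) (Fin n) ℝ) + t • A)⁻¹)
      = C (fun i => Real.log (μ i)) := by
    rw [hint, hspec, ← hCone, ← hCsub, hCmul]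
    have : ((μ - 1) * fun i => ∫ t in (0:ℝ)..1, (1 - t + t * μ i)⁻¹)
        = fun i => Real.log (μ i) := by
      funext i
      simpa using scalar_log (μ i) (hμ i)
    rw [this]
  rw [hlog]
  constructor
  · exact hCT _
  · have hUunit : IsUnit U := ⟨⟨U, star U, hU2, hU1⟩, rfl⟩
    show NormedSpace.exp (U * diagonal (fun i => Real.log (μ i)) * star U) = A
    rw [← hUinv, Matrix.exp_conj U _ hUunit, Matrix.exp_diagonal, Pi.exp_def]
    have : (fun i => NormedSpace.exp (Real.log (μ i))) = μ := by
      funext i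
      rw [← Real.exp_eq_exp_ℝ, Real.exp_log (hμ i)]
    rw [this, hUinv]
    exact hspec.symm
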